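/- Consider the closed-loop interconnection x_{k+1} = A x_k + B u_k, y_k = C x_k + D u_k + d, u_{k+1} = u_k − η(∇Φ¹(u_k) + H_diag ∇Φ²(y_k)), with σ_max(A) < 1, and assume m > c where m = m_u + σ_min(H)² m_y and c = σ_max(H − H_diag) σ_max(H) L_y for the steady-state sensitivity H = C(I − A)⁻¹B + D. Let u∞ be the unique point with ∇Φ¹(u∞) + H_diag ∇Φ²(Hu∞ + d) = 0 and H_x = (I − A)⁻¹B. Then there exists η* > 0 such that for every η with 0 < η < η*, there exists λ ∈ [0, 1) such that for every k ≥ 0 and every initial condition (x₀, u₀), ‖x_k − H_x u_k‖² + ‖u_k − u∞‖² ≤ λ^k (‖x₀ − H_x u₀‖² + ‖u₀ − u∞‖²). -/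

import Mathlib

open RealInnerProductSpace

/-- Largest singular value of a square matrix: the operator 2-norm of `v ↦ M v`
on Euclidean space. -/
noncomputable def sigmaMax {N : ℕ} (M : Matrix (Fin N) (Fin N) ℝ) : ℝ :=
  ‖Matrix.toEuclideanCLM (𝕜 := ℝ) M‖

/-- Smallest singular value of a square matrix: the infimum of `‖M v‖` over the
unit sphere of Euclidean space. -/
noncomputable def sigmaMin {N : ℕ} (M : Matrix (Fin N) (Fin N) ℝ) : ℝ :=
  sInf ((fun v : EuclideanSpace ℝ (Fin N) => ‖Matrix.toEuclideanCLM (𝕜 := ℝ) M v‖) '' {v | ‖v‖ = 1})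

/-- Matrix-vector multiplication as a map on Euclidean space. -/
noncomputable def mulV {N : ℕ} (M : Matrix (Fin N) (Fin N) ℝ) (v : EuclideanSpace ℝ (Fin N)) :
    EuclideanSpace ℝ (Fin N) :=
  Matrix.toEuclideanCLM (𝕜 := ℝ) M v

section Helpers

variable {N : ℕ}

lemma sigmaMax_nonneg' (M : Matrix (Fin N) (Fin N) ℝ) : 0 ≤ sigmaMax M := norm_nonneg _

lemma mulV_norm_le' (M : Matrix (Fin N) (Fin N) ℝ) (v : EuclideanSpace ℝ (Fin N)) :
    ‖mulV M v‖ ≤ sigmaMax M * ‖v‖ := (Matrix.toEuclideanCLM (𝕜 := ℝ) M).le_opNorm v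

lemma mulV_sub' (M : Matrix (Fin N) (Fin N) ℝ) (v w : EuclideanSpace ℝ (Fin N)) :
    mulV M (v - w) = mulV M v - mulV M w := map_sub _ _ _

lemma mulV_smul' (M : Matrix (Fin N) (Fin N) ℝ) (r : ℝ) (v : EuclideanSpace ℝ (Fin N)) :
    mulV M (r • v) = r • mulV M v := map_smul _ _ _

lemma mulV_mat_sub' (M₁ M₂ : Matrix (Fin N) (Fin N) ℝ) (v : EuclideanSpace ℝ (Fin N)) :
    mulV (M₁ - M₂) v = mulV M₁ v - mulV M₂ v := by
  simp [mulV, map_sub]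

lemma mulV_mat_add' (M₁ M₂ : Matrix (Fin N) (Fin N) ℝ) (v : EuclideanSpace ℝ (Fin N)) :
    mulV (M₁ + M₂) v = mulV M₁ v + mulV M₂ v := by
  simp [mulV, map_add]

lemma mulV_mat_mul' (M₁ M₂ : Matrix (Fin N) (Fin N) ℝ) (v : EuclideanSpace ℝ (Fin N)) :
    mulV (M₁ * M₂) v = mulV M₁ (mulV M₂ v) := by
  simp [mulV, map_mul]

lemma isUnit_one_sub_of_sigmaMax_lt_one' (A : Matrix (Fin N) (Fin N) ℝ) (hA : sigmaMax A < 1) :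
    IsUnit (1 - A) := by
  have h : IsUnit (1 - Matrix.toEuclideanCLM (𝕜 := ℝ) A) := (Units.oneSub _ hA).isUnit
  have h2 : IsUnit (Matrix.toEuclideanCLM (𝕜 := ℝ) (1 - A)) := by
    rwa [map_sub, map_one]
  exact (isUnit_map_iff (Matrix.toEuclideanCLM (𝕜 := ℝ)) (1 - A)).mp h2

lemma sigmaMin_nonneg' (M : Matrix (Fin N) (Fin N) ℝ) : 0 ≤ sigmaMin M := by
  apply Real.sInf_nonneg
  rintro x ⟨v, -, rfl⟩
  exact norm_nonneg _

lemma sigmaMin_mul_le' (M : Matrix (Fin N) (Fin N) ℝ) (v : EuclideanSpace ℝ (Fin N)) :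
    sigmaMin M * ‖v‖ ≤ ‖mulV M v‖ := by
  rcases eq_or_ne v 0 with rfl | hv
  · simp [mulV]
  · have hnv : (0:ℝ) < ‖v‖ := norm_pos_iff.mpr hv
    have hbdd : BddBelow ((fun v : EuclideanSpace ℝ (Fin N) =>
        ‖Matrix.toEuclideanCLM (𝕜 := ℝ) M v‖) '' {v | ‖v‖ = 1}) := by
      refine ⟨0, ?_⟩
      rintro x ⟨w, -, rfl⟩
      exact norm_nonneg _
    have hmem : ‖(‖v‖⁻¹ • v : EuclideanSpace ℝ (Fin N))‖ = 1 := by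
      rw [norm_smul, norm_inv, norm_norm, inv_mul_cancel₀ hnv.ne']
    have hle : sigmaMin M ≤ ‖Matrix.toEuclideanCLM (𝕜 := ℝ) M (‖v‖⁻¹ • v)‖ :=
      csInf_le hbdd ⟨_, hmem, rfl⟩
    rw [_root_.map_smul, norm_smul, norm_inv, norm_norm] at hle
    calc sigmaMin M * ‖v‖ ≤ (‖v‖⁻¹ * ‖Matrix.toEuclideanCLM (𝕜 := ℝ) M v‖) * ‖v‖ :=
          mul_le_mul_of_nonneg_right hle hnv.le
      _ = ‖mulV M v‖ := by field_simp [mulV]; rfl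

lemma inner_mulV_symm' (M : Matrix (Fin N) (Fin N) ℝ) (hM : M.conjTranspose = M)
    (v w : EuclideanSpace ℝ (Fin N)) : ⟪mulV M v, w⟫ = ⟪v, mulV M w⟫ := by
  have hadj : ContinuousLinearMap.adjoint (Matrix.toEuclideanCLM (𝕜 := ℝ) M)
      = Matrix.toEuclideanCLM (𝕜 := ℝ) M := by
    rw [← ContinuousLinearMap.star_eq_adjoint, ← map_star, Matrix.star_eq_conjTranspose, hM]
  calc ⟪mulV M v, w⟫ = ⟪ContinuousLinearMap.adjoint (Matrix.toEuclideanCLM (𝕜 := ℝ) M) v, w⟫ := by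
        rw [hadj]; rfl
    _ = ⟪v, mulV M w⟫ := ContinuousLinearMap.adjoint_inner_left _ _ _

set_option maxHeartbeats 1000000 in
lemma scalar_key' (σA ζ L κ mc η a b δ : ℝ)
    (hδdef : δ = 1 - σA^2) (hδ : 0 < δ) (hη : 0 < η) :
    (σA*a + η*(ζ*(L*b+κ*a)))^2 + (b^2 - 2*η*(mc*b^2 - κ*a*b) + η^2*(L*b+κ*a)^2)
      ≤ (1 - δ/4 + η^2*((1 + 2*σA^2/δ) * (ζ^2*(L^2+κ^2)) + 4*κ^2/δ + (L^2+κ^2)))*a^2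
        + (1 - 2*η*mc + η^2*((1 + 2*σA^2/δ) * (ζ^2*(L^2+κ^2)) + 4*κ^2/δ + (L^2+κ^2)))*b^2 := by
  set X := η*(ζ*(L*b+κ*a)) with hXdef
  have hP : (L*b+κ*a)^2 ≤ (L^2+κ^2)*(a^2+b^2) := by nlinarith [sq_nonneg (L*a - κ*b)]
  have S1 : 2*(σA*a)*X ≤ δ/2*a^2 + 2*σA^2/δ*X^2 := by
    have h1 : δ*(2*(σA*a)*X) ≤ δ*(δ/2*a^2 + 2*σA^2/δ*X^2) := by
      have e1 : δ*(δ/2*a^2 + 2*σA^2/δ*X^2) = δ^2/2*a^2 + 2*σA^2*X^2 := by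
        field_simp
      rw [e1]; nlinarith [sq_nonneg (δ*a - 2*σA*X)]
    exact le_of_mul_le_mul_left h1 hδ
  have S3 : 2*η*(κ*a*b) ≤ δ/4*a^2 + 4*η^2*κ^2/δ*b^2 := by
    have h1 : δ*(2*η*(κ*a*b)) ≤ δ*(δ/4*a^2 + 4*η^2*κ^2/δ*b^2) := by
      have e1 : δ*(δ/4*a^2 + 4*η^2*κ^2/δ*b^2) = δ^2/4*a^2 + 4*η^2*κ^2*b^2 := by
        field_simp
      rw [e1]; nlinarith [sq_nonneg (δ*a - 4*η*κ*b)]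
    exact le_of_mul_le_mul_left h1 hδ
  have hXP : X^2 ≤ η^2*ζ^2*((L^2+κ^2)*(a^2+b^2)) := by
    have h2 := mul_le_mul_of_nonneg_left hP (by positivity : (0:ℝ) ≤ η^2*ζ^2)
    calc X^2 = η^2*ζ^2*(L*b+κ*a)^2 := by rw [hXdef]; ring
      _ ≤ η^2*ζ^2*((L^2+κ^2)*(a^2+b^2)) := h2
  have hcoef : 0 ≤ 1 + 2*σA^2/δ := by positivity
  have c1 : (1 + 2*σA^2/δ)*X^2 ≤ (1 + 2*σA^2/δ)*(η^2*ζ^2*((L^2+κ^2)*(a^2+b^2))) :=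
    mul_le_mul_of_nonneg_left hXP hcoef
  have c2 : η^2*(L*b+κ*a)^2 ≤ η^2*((L^2+κ^2)*(a^2+b^2)) :=
    mul_le_mul_of_nonneg_left hP (sq_nonneg η)
  have c3 : 4*η^2*κ^2/δ*b^2 ≤ 4*κ^2/δ*(η^2*(a^2+b^2)) := by
    have h0 : (0:ℝ) ≤ 4*κ^2/δ*(η^2*a^2) := by positivity
    have e0 : 4*κ^2/δ*(η^2*(a^2+b^2)) - 4*η^2*κ^2/δ*b^2 = 4*κ^2/δ*(η^2*a^2) := by ring
    linarith [h0, e0]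
  have hσsub : σA^2*a^2 = (1-δ)*a^2 := by rw [hδdef]; ring
  linarith [S1, S3, c1, c2, c3, hσsub]

end Helpers

set_option maxHeartbeats 4000000 in
/-- Theorem 4: linear convergence of the decentralized controller
interconnected with a stable LTI plant. Under `σ_max(A) < 1` and the diagonal-dominance
condition `m > c` for the steady-state sensitivity `H = C(I − A)⁻¹B + D`, there exists a step
size threshold `η* > 0` such that for all `0 < η < η*` there is a rate `λ ∈ [0, 1)` with
`‖x_k − H_x u_k‖² + ‖u_k − u∞‖² ≤ λ^k (‖x₀ − H_x u₀‖² + ‖u₀ − u∞‖²)` along the closed loop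
`x_{k+1} = Ax_k + Bu_k`, `y_k = Cx_k + Du_k + d`,
`u_{k+1} = u_k − η(∇Φ¹(u_k) + H_diag ∇Φ²(y_k))`. -/
theorem stmt11 {N : ℕ} (hN : 0 < N)
    (A B C D : Matrix (Fin N) (Fin N) ℝ) (hA : sigmaMax A < 1)
    (d : EuclideanSpace ℝ (Fin N))
    (Φ1 Φ2 : EuclideanSpace ℝ (Fin N) → ℝ)
    (mu Lu my Ly : ℝ)
    (hmu : 0 < mu) (hmuLu : mu ≤ Lu) (hmy : 0 < my) (hmyLy : my ≤ Ly)
    (hΦ1diff : Differentiable ℝ Φ1) (hΦ2diff : Differentiable ℝ Φ2)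
    (hΦ1mono : ∀ a b, mu * ‖a - b‖ ^ 2 ≤ ⟪gradient Φ1 a - gradient Φ1 b, a - b⟫)
    (hΦ1lip : ∀ a b, ‖gradient Φ1 a - gradient Φ1 b‖ ≤ Lu * ‖a - b‖)
    (hΦ2mono : ∀ a b, my * ‖a - b‖ ^ 2 ≤ ⟪gradient Φ2 a - gradient Φ2 b, a - b⟫)
    (hΦ2lip : ∀ a b, ‖gradient Φ2 a - gradient Φ2 b‖ ≤ Ly * ‖a - b‖)
    (Hx H Hdiag : Matrix (Fin N) (Fin N) ℝ)
    (hHx : Hx = (1 - A)⁻¹ * B)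
    (hH : H = C * Hx + D)
    (hHdiag : Hdiag = Matrix.diagonal (fun i => H i i))
    (m c : ℝ)
    (hm : m = mu + sigmaMin H ^ 2 * my)
    (hc : c = sigmaMax (H - Hdiag) * sigmaMax H * Ly)
    (hmc : m > c)
    (uinf : EuclideanSpace ℝ (Fin N))
    (huinf : gradient Φ1 uinf + mulV Hdiag (gradient Φ2 (mulV H uinf + d)) = 0) :
    ∃ ηstar : ℝ, 0 < ηstar ∧
      ∀ η : ℝ, 0 < η → η < ηstar →
        ∃ lam : ℝ, 0 ≤ lam ∧ lam < 1 ∧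
          ∀ x u y : ℕ → EuclideanSpace ℝ (Fin N),
            (∀ k, x (k + 1) = mulV A (x k) + mulV B (u k)) →
            (∀ k, y k = mulV C (x k) + mulV D (u k) + d) →
            (∀ k, u (k + 1) = u k - η • (gradient Φ1 (u k) + mulV Hdiag (gradient Φ2 (y k)))) →
            ∀ k : ℕ,
              ‖x k - mulV Hx (u k)‖ ^ 2 + ‖u k - uinf‖ ^ 2 ≤
                lam ^ k * (‖x 0 - mulV Hx (u 0)‖ ^ 2 + ‖u 0 - uinf‖ ^ 2) := by
  classical
  have hLu0 : (0:ℝ) ≤ Lu := le_trans hmu.le hmuLu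
  have hLy0 : (0:ℝ) ≤ Ly := le_trans hmy.le hmyLy
  have hsA0 : (0:ℝ) ≤ sigmaMax A := sigmaMax_nonneg' A
  -- matrix identities
  have hunit : IsUnit (1 - A) := isUnit_one_sub_of_sigmaMax_lt_one' A hA
  have hdet : IsUnit (1 - A).det := (Matrix.isUnit_iff_isUnit_det _).mp hunit
  have hxid : (1 - A) * Hx = B := by
    rw [hHx, ← mul_assoc, Matrix.mul_nonsing_inv _ hdet, one_mul]
  have hAHxB : A * Hx + B = Hx := by
    have h2 : A * Hx + (1 - A) * Hx = Hx := by rw [sub_mul, one_mul]; abel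
    rwa [hxid] at h2
  have hAHx : ∀ v, mulV A (mulV Hx v) + mulV B v = mulV Hx v := by
    intro v
    rw [← mulV_mat_mul', ← mulV_mat_add', hAHxB]
  have hCHx : ∀ v, mulV C (mulV Hx v) + mulV D v = mulV H v := by
    intro v
    rw [← mulV_mat_mul', ← mulV_mat_add', ← hH]
  have hHdsymm : Hdiag.conjTranspose = Hdiag := by
    rw [hHdiag, Matrix.diagonal_conjTranspose]
    simp
  have hdinner : ∀ v w, ⟪mulV Hdiag v, w⟫ = ⟪v, mulV Hdiag w⟫ := inner_mulV_symm' Hdiag hHdsymm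
  have hsplit : ∀ w, mulV Hdiag w = mulV H w - mulV (H - Hdiag) w := by
    intro w
    rw [← mulV_mat_sub', sub_sub_cancel]
  -- nominal gradient map
  set G : EuclideanSpace ℝ (Fin N) → EuclideanSpace ℝ (Fin N) :=
    fun w => gradient Φ1 w + mulV Hdiag (gradient Φ2 (mulV H w + d)) with hGdef
  have hGuinf : G uinf = 0 := by simp only [hGdef]; exact huinf
  have hHab : ∀ p q : EuclideanSpace ℝ (Fin N),
      (mulV H p + d) - (mulV H q + d) = mulV H (p - q) := by
    intro p q
    rw [mulV_sub']; abel
  have hΦ2H : ∀ p q : EuclideanSpace ℝ (Fin N),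
      ‖gradient Φ2 (mulV H p + d) - gradient Φ2 (mulV H q + d)‖
        ≤ Ly * (sigmaMax H * ‖p - q‖) := by
    intro p q
    have h := hΦ2lip (mulV H p + d) (mulV H q + d)
    rw [hHab p q] at h
    calc ‖gradient Φ2 (mulV H p + d) - gradient Φ2 (mulV H q + d)‖
        ≤ Ly * ‖mulV H (p - q)‖ := h
      _ ≤ Ly * (sigmaMax H * ‖p - q‖) :=
          mul_le_mul_of_nonneg_left (mulV_norm_le' _ _) hLy0
  have hGsub : ∀ p q : EuclideanSpace ℝ (Fin N), G p - G q =
      (gradient Φ1 p - gradient Φ1 q)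
        + mulV Hdiag (gradient Φ2 (mulV H p + d) - gradient Φ2 (mulV H q + d)) := by
    intro p q
    simp only [hGdef]
    rw [mulV_sub']
    abel
  have hGmono : ∀ p q : EuclideanSpace ℝ (Fin N),
      (m - c) * ‖p - q‖^2 ≤ ⟪G p - G q, p - q⟫ := by
    intro p q
    rw [hGsub p q, inner_add_left]
    have h1 := hΦ1mono p q
    have h2 : ⟪mulV Hdiag (gradient Φ2 (mulV H p + d) - gradient Φ2 (mulV H q + d)), p - q⟫
        = ⟪gradient Φ2 (mulV H p + d) - gradient Φ2 (mulV H q + d), mulV H (p - q)⟫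
          - ⟪gradient Φ2 (mulV H p + d) - gradient Φ2 (mulV H q + d),
              mulV (H - Hdiag) (p - q)⟫ := by
      rw [hdinner, hsplit, inner_sub_right]
    have h3 : my * ‖mulV H (p - q)‖^2
        ≤ ⟪gradient Φ2 (mulV H p + d) - gradient Φ2 (mulV H q + d), mulV H (p - q)⟫ := by
      have h := hΦ2mono (mulV H p + d) (mulV H q + d)
      rwa [hHab p q] at h
    have h4 : sigmaMin H * ‖p - q‖ ≤ ‖mulV H (p - q)‖ := sigmaMin_mul_le' H (p - q)
    have h40 : 0 ≤ sigmaMin H * ‖p - q‖ := mul_nonneg (sigmaMin_nonneg' H) (norm_nonneg _)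
    have h5 : (sigmaMin H)^2 * ‖p - q‖^2 ≤ ‖mulV H (p - q)‖^2 := by
      nlinarith [mul_self_le_mul_self h40 h4]
    have h7 : my * ((sigmaMin H)^2 * ‖p - q‖^2) ≤ my * ‖mulV H (p - q)‖^2 :=
      mul_le_mul_of_nonneg_left h5 hmy.le
    have h6 : ⟪gradient Φ2 (mulV H p + d) - gradient Φ2 (mulV H q + d),
        mulV (H - Hdiag) (p - q)⟫ ≤ c * ‖p - q‖^2 := by
      have hb1 := hΦ2H p q
      have hb2 : ‖mulV (H - Hdiag) (p - q)‖ ≤ sigmaMax (H - Hdiag) * ‖p - q‖ :=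
        mulV_norm_le' _ _
      have h0 : (0:ℝ) ≤ Ly * (sigmaMax H * ‖p - q‖) :=
        mul_nonneg hLy0 (mul_nonneg (sigmaMax_nonneg' _) (norm_nonneg _))
      calc ⟪gradient Φ2 (mulV H p + d) - gradient Φ2 (mulV H q + d),
            mulV (H - Hdiag) (p - q)⟫
          ≤ ‖gradient Φ2 (mulV H p + d) - gradient Φ2 (mulV H q + d)‖
              * ‖mulV (H - Hdiag) (p - q)‖ := real_inner_le_norm _ _
        _ ≤ (Ly * (sigmaMax H * ‖p - q‖)) * (sigmaMax (H - Hdiag) * ‖p - q‖) :=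
            mul_le_mul hb1 hb2 (norm_nonneg _) h0
        _ = c * ‖p - q‖^2 := by rw [hc]; ring
    rw [h2, hm]
    linarith [h1, h3, h6, h7]
  have hGlip : ∀ p q : EuclideanSpace ℝ (Fin N),
      ‖G p - G q‖ ≤ (Lu + sigmaMax Hdiag * (Ly * sigmaMax H)) * ‖p - q‖ := by
    intro p q
    rw [hGsub p q]
    calc ‖(gradient Φ1 p - gradient Φ1 q)
          + mulV Hdiag (gradient Φ2 (mulV H p + d) - gradient Φ2 (mulV H q + d))‖
        ≤ ‖gradient Φ1 p - gradient Φ1 q‖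
          + ‖mulV Hdiag (gradient Φ2 (mulV H p + d) - gradient Φ2 (mulV H q + d))‖ :=
          norm_add_le _ _
      _ ≤ Lu * ‖p - q‖ + sigmaMax Hdiag
            * ‖gradient Φ2 (mulV H p + d) - gradient Φ2 (mulV H q + d)‖ :=
          add_le_add (hΦ1lip p q) (mulV_norm_le' _ _)
      _ ≤ Lu * ‖p - q‖ + sigmaMax Hdiag * (Ly * (sigmaMax H * ‖p - q‖)) := by
          have := mul_le_mul_of_nonneg_left (hΦ2H p q) (sigmaMax_nonneg' Hdiag)
          linarith
      _ = (Lu + sigmaMax Hdiag * (Ly * sigmaMax H)) * ‖p - q‖ := by ring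
  -- constants
  obtain ⟨L, hLdef⟩ : ∃ L : ℝ, L = Lu + sigmaMax Hdiag * (Ly * sigmaMax H) := ⟨_, rfl⟩
  obtain ⟨κ, hκdef⟩ : ∃ κ : ℝ, κ = sigmaMax Hdiag * (Ly * sigmaMax C) := ⟨_, rfl⟩
  obtain ⟨δ, hδdef⟩ : ∃ δ : ℝ, δ = 1 - sigmaMax A ^ 2 := ⟨_, rfl⟩
  have hδpos : 0 < δ := by rw [hδdef]; nlinarith [hsA0, hA]
  obtain ⟨K, hKdef⟩ : ∃ K : ℝ,
      K = (1 + 2*(sigmaMax A)^2/δ) * ((sigmaMax Hx)^2*(L^2+κ^2)) + 4*κ^2/δ + (L^2+κ^2) :=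
    ⟨_, rfl⟩
  have hL0 : 0 ≤ L := by
    rw [hLdef]
    have : 0 ≤ sigmaMax Hdiag * (Ly * sigmaMax H) :=
      mul_nonneg (sigmaMax_nonneg' _) (mul_nonneg hLy0 (sigmaMax_nonneg' _))
    linarith
  have hκ0 : 0 ≤ κ := by
    rw [hκdef]
    exact mul_nonneg (sigmaMax_nonneg' _) (mul_nonneg hLy0 (sigmaMax_nonneg' _))
  have hK0 : 0 ≤ K := by
    rw [hKdef]
    have t1 : (0:ℝ) ≤ 1 + 2*(sigmaMax A)^2/δ := by
      have := div_nonneg (by positivity : (0:ℝ) ≤ 2*(sigmaMax A)^2) hδpos.le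
      linarith
    have t2 : (0:ℝ) ≤ (sigmaMax Hx)^2*(L^2+κ^2) := by positivity
    have t3 : (0:ℝ) ≤ 4*κ^2/δ := div_nonneg (by positivity) hδpos.le
    have t4 : (0:ℝ) ≤ L^2+κ^2 := by positivity
    exact add_nonneg (add_nonneg (mul_nonneg t1 t2) t3) t4
  have hK1 : (0:ℝ) < K + 1 := by linarith
  have hmcpos : 0 < m - c := sub_pos.mpr hmc
  refine ⟨min ((m-c)/(K+1)) (min (δ/(4*(K+1))) 1), ?_, ?_⟩
  · exact lt_min (div_pos hmcpos hK1) (lt_min (div_pos hδpos (by linarith)) one_pos)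
  intro η hη hηlt
  have hη1 : η ≤ 1 :=
    le_of_lt (lt_of_lt_of_le hηlt (le_trans (min_le_right _ _) (min_le_right _ _)))
  have hη2 : η*(K+1) < m - c := by
    have h := lt_of_lt_of_le hηlt (min_le_left _ _)
    exact (lt_div_iff₀ hK1).mp h
  have hη3 : η*(K+1) < δ/4 := by
    have h := lt_of_lt_of_le hηlt (le_trans (min_le_right _ _) (min_le_left _ _))
    have h2 := (lt_div_iff₀ (by linarith : (0:ℝ) < 4*(K+1))).mp h
    linarith
  have tK : η*(η*K) ≤ η*K := mul_le_mul_of_nonneg_left (mul_le_of_le_one_left hK0 hη1) hη.le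
  have hη2K : η^2*K < δ/4 := by nlinarith [tK, hη3, hη.le]
  have t2K : η*(η*(K+1)) < η*(m-c) := mul_lt_mul_of_pos_left hη2 hη
  have hη2K2 : η^2*K < 2*η*(m-c) := by nlinarith [t2K, mul_pos hη hmcpos, sq_nonneg η]
  obtain ⟨lam, hlamdef⟩ : ∃ lam : ℝ,
      lam = max (max (1 - δ/4 + η^2*K) (1 - 2*η*(m-c) + η^2*K)) 0 := ⟨_, rfl⟩
  have hlam0 : 0 ≤ lam := hlamdef ▸ le_max_right _ _
  have hlam1 : 1 - δ/4 + η^2*K ≤ lam :=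
    hlamdef ▸ le_trans (le_max_left _ _) (le_max_left _ _)
  have hlam2 : 1 - 2*η*(m-c) + η^2*K ≤ lam :=
    hlamdef ▸ le_trans (le_max_right _ _) (le_max_left _ _)
  refine ⟨lam, hlam0, ?_, ?_⟩
  · rw [hlamdef]
    apply max_lt (max_lt ?_ ?_) one_pos
    · linarith
    · linarith
  intro x u y hx hy hu
  -- one-step contraction
  have key : ∀ k, ‖x (k+1) - mulV Hx (u (k+1))‖^2 + ‖u (k+1) - uinf‖^2 ≤
      lam * (‖x k - mulV Hx (u k)‖^2 + ‖u k - uinf‖^2) := by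
    intro k
    set gk : EuclideanSpace ℝ (Fin N) :=
      gradient Φ1 (u k) + mulV Hdiag (gradient Φ2 (y k)) with hgk
    have hzstep : x (k+1) - mulV Hx (u (k+1))
        = mulV A (x k - mulV Hx (u k)) + η • mulV Hx gk := by
      have h' : mulV A (mulV Hx (u k)) = mulV Hx (u k) - mulV B (u k) := by
        rw [eq_sub_iff_add_eq]; exact hAHx (u k)
      rw [hx k, hu k, ← hgk, mulV_sub' Hx, mulV_smul', mulV_sub' A, h']
      abel
    have hestep : u (k+1) - uinf = (u k - uinf) - η • gk := by
      rw [hu k, ← hgk]; abel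
    have hydiff : y k - (mulV H (u k) + d) = mulV C (x k - mulV Hx (u k)) := by
      have h' : mulV C (mulV Hx (u k)) = mulV H (u k) - mulV D (u k) := by
        rw [eq_sub_iff_add_eq]; exact hCHx (u k)
      rw [hy k, mulV_sub' C, h']
      abel
    have hgdec : gk = (G (u k) - G uinf)
        + mulV Hdiag (gradient Φ2 (y k) - gradient Φ2 (mulV H (u k) + d)) := by
      rw [hgk, hGuinf, sub_zero, mulV_sub']
      simp only [hGdef]
      abel
    have hΔle : ‖mulV Hdiag (gradient Φ2 (y k) - gradient Φ2 (mulV H (u k) + d))‖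
        ≤ κ * ‖x k - mulV Hx (u k)‖ := by
      calc ‖mulV Hdiag (gradient Φ2 (y k) - gradient Φ2 (mulV H (u k) + d))‖
          ≤ sigmaMax Hdiag * ‖gradient Φ2 (y k) - gradient Φ2 (mulV H (u k) + d)‖ :=
            mulV_norm_le' _ _
        _ ≤ sigmaMax Hdiag * (Ly * ‖y k - (mulV H (u k) + d)‖) :=
            mul_le_mul_of_nonneg_left (hΦ2lip _ _) (sigmaMax_nonneg' _)
        _ = sigmaMax Hdiag * (Ly * ‖mulV C (x k - mulV Hx (u k))‖) := by rw [hydiff]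
        _ ≤ sigmaMax Hdiag * (Ly * (sigmaMax C * ‖x k - mulV Hx (u k)‖)) := by
            refine mul_le_mul_of_nonneg_left ?_ (sigmaMax_nonneg' _)
            exact mul_le_mul_of_nonneg_left (mulV_norm_le' _ _) hLy0
        _ = κ * ‖x k - mulV Hx (u k)‖ := by rw [hκdef]; ring
    have hGele : ‖G (u k) - G uinf‖ ≤ L * ‖u k - uinf‖ := by
      rw [hLdef]; exact hGlip (u k) uinf
    have hgle : ‖gk‖ ≤ L * ‖u k - uinf‖ + κ * ‖x k - mulV Hx (u k)‖ := by
      rw [hgdec]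
      exact le_trans (norm_add_le _ _) (add_le_add hGele hΔle)
    have hinner : (m-c) * ‖u k - uinf‖^2 - κ*‖x k - mulV Hx (u k)‖*‖u k - uinf‖
        ≤ ⟪gk, u k - uinf⟫ := by
      rw [hgdec, inner_add_left]
      have h1 := hGmono (u k) uinf
      have habs := abs_real_inner_le_norm
        (mulV Hdiag (gradient Φ2 (y k) - gradient Φ2 (mulV H (u k) + d))) (u k - uinf)
      have h2 : -(‖mulV Hdiag (gradient Φ2 (y k) - gradient Φ2 (mulV H (u k) + d))‖
          * ‖u k - uinf‖)
          ≤ ⟪mulV Hdiag (gradient Φ2 (y k) - gradient Φ2 (mulV H (u k) + d)), u k - uinf⟫ :=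
        (abs_le.mp habs).1
      have hmul : ‖mulV Hdiag (gradient Φ2 (y k) - gradient Φ2 (mulV H (u k) + d))‖
          * ‖u k - uinf‖ ≤ κ*‖x k - mulV Hx (u k)‖*‖u k - uinf‖ :=
        mul_le_mul_of_nonneg_right hΔle (norm_nonneg _)
      linarith [h1, h2, hmul]
    have hznorm : ‖x (k+1) - mulV Hx (u (k+1))‖
        ≤ sigmaMax A * ‖x k - mulV Hx (u k)‖
          + η * (sigmaMax Hx * (L*‖u k - uinf‖ + κ*‖x k - mulV Hx (u k)‖)) := by
      rw [hzstep]
      have hs1 : ‖mulV A (x k - mulV Hx (u k)) + η • mulV Hx gk‖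
          ≤ ‖mulV A (x k - mulV Hx (u k))‖ + ‖η • mulV Hx gk‖ := norm_add_le _ _
      have hs2 : ‖η • mulV Hx gk‖ = η * ‖mulV Hx gk‖ := by
        rw [norm_smul, Real.norm_eq_abs, abs_of_pos hη]
      have hs3 : ‖mulV Hx gk‖ ≤ sigmaMax Hx * ‖gk‖ := mulV_norm_le' _ _
      have hs4 : sigmaMax Hx * ‖gk‖
          ≤ sigmaMax Hx * (L*‖u k - uinf‖ + κ*‖x k - mulV Hx (u k)‖) :=
        mul_le_mul_of_nonneg_left hgle (sigmaMax_nonneg' _)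
      have hs5 : ‖mulV A (x k - mulV Hx (u k))‖ ≤ sigmaMax A * ‖x k - mulV Hx (u k)‖ :=
        mulV_norm_le' _ _
      have hs6 : η * ‖mulV Hx gk‖
          ≤ η * (sigmaMax Hx * (L*‖u k - uinf‖ + κ*‖x k - mulV Hx (u k)‖)) :=
        mul_le_mul_of_nonneg_left (le_trans hs3 hs4) hη.le
      rw [hs2] at hs1
      linarith [hs1, hs5, hs6]
    have hz1 : ‖x (k+1) - mulV Hx (u (k+1))‖^2
        ≤ (sigmaMax A * ‖x k - mulV Hx (u k)‖
          + η * (sigmaMax Hx * (L*‖u k - uinf‖ + κ*‖x k - mulV Hx (u k)‖)))^2 :=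
      pow_le_pow_left₀ (norm_nonneg _) hznorm 2
    have he1 : ‖u (k+1) - uinf‖^2
        = ‖u k - uinf‖^2 - 2*η*⟪gk, u k - uinf⟫ + η^2*‖gk‖^2 := by
      rw [hestep, norm_sub_sq_real, real_inner_smul_right, norm_smul, Real.norm_eq_abs,
        abs_of_pos hη, real_inner_comm (u k - uinf) gk]
      ring
    have he2 : ‖u (k+1) - uinf‖^2
        ≤ ‖u k - uinf‖^2
          - 2*η*((m-c)*‖u k - uinf‖^2 - κ*‖x k - mulV Hx (u k)‖*‖u k - uinf‖)
          + η^2*(L*‖u k - uinf‖ + κ*‖x k - mulV Hx (u k)‖)^2 := by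
      rw [he1]
      have hg2 : ‖gk‖^2 ≤ (L*‖u k - uinf‖ + κ*‖x k - mulV Hx (u k)‖)^2 :=
        pow_le_pow_left₀ (norm_nonneg _) hgle 2
      have hin2 := mul_le_mul_of_nonneg_left hinner (by linarith : (0:ℝ) ≤ 2*η)
      have hg22 := mul_le_mul_of_nonneg_left hg2 (sq_nonneg η)
      linarith [hin2, hg22]
    have hmain := scalar_key' (sigmaMax A) (sigmaMax Hx) L κ (m-c) η
      ‖x k - mulV Hx (u k)‖ ‖u k - uinf‖ δ hδdef hδpos hη
    rw [← hKdef] at hmain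
    have ha2 : (1 - δ/4 + η^2*K)*‖x k - mulV Hx (u k)‖^2 ≤ lam*‖x k - mulV Hx (u k)‖^2 :=
      mul_le_mul_of_nonneg_right hlam1 (sq_nonneg _)
    have hb2 : (1 - 2*η*(m-c) + η^2*K)*‖u k - uinf‖^2 ≤ lam*‖u k - uinf‖^2 :=
      mul_le_mul_of_nonneg_right hlam2 (sq_nonneg _)
    calc ‖x (k+1) - mulV Hx (u (k+1))‖^2 + ‖u (k+1) - uinf‖^2
        ≤ (sigmaMax A * ‖x k - mulV Hx (u k)‖
            + η * (sigmaMax Hx * (L*‖u k - uinf‖ + κ*‖x k - mulV Hx (u k)‖)))^2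
          + (‖u k - uinf‖^2
            - 2*η*((m-c)*‖u k - uinf‖^2 - κ*‖x k - mulV Hx (u k)‖*‖u k - uinf‖)
            + η^2*(L*‖u k - uinf‖ + κ*‖x k - mulV Hx (u k)‖)^2) := add_le_add hz1 he2
      _ ≤ (1 - δ/4 + η^2*K)*‖x k - mulV Hx (u k)‖^2
          + (1 - 2*η*(m-c) + η^2*K)*‖u k - uinf‖^2 := hmain
      _ ≤ lam*‖x k - mulV Hx (u k)‖^2 + lam*‖u k - uinf‖^2 := add_le_add ha2 hb2
      _ = lam * (‖x k - mulV Hx (u k)‖^2 + ‖u k - uinf‖^2) := by ring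
  -- induction
  intro k
  induction k with
  | zero => simp
  | succ n ih =>
      calc ‖x (n+1) - mulV Hx (u (n+1))‖^2 + ‖u (n+1) - uinf‖^2
          ≤ lam * (‖x n - mulV Hx (u n)‖^2 + ‖u n - uinf‖^2) := key n
        _ ≤ lam * (lam^n * (‖x 0 - mulV Hx (u 0)‖^2 + ‖u 0 - uinf‖^2)) :=
            mul_le_mul_of_nonneg_left ih hlam0
        _ = lam^(n+1) * (‖x 0 - mulV Hx (u 0)‖^2 + ‖u 0 - uinf‖^2) := by ring
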